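/- arXiv:1207.4733 — 2 statements merged into one kernel-verified Lean document; each statement's English description precedes it below -/
import Mathlib

section
/- For every ε > 0, the adiabatic time satisfies t_ad(P₀, P₁, ε) ≤ 2 · t_mix(P₁, ε/2)² / ε. -/
open Matrix BigOperators

/-- A row-stochastic matrix: nonnegative entries, each row sums to 1. -/
def IsStochastic {n : ℕ} (P : Matrix (Fin n) (Fin n) ℝ) : Prop :=
  (∀ i j, 0 ≤ P i j) ∧ ∀ i, ∑ j, P i j = 1

/-- Irreducibility: every state can reach every other state. -/
def MCIrreducible {n : ℕ} (P : Matrix (Fin n) (Fin n) ℝ) : Prop :=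
  ∀ i j, ∃ m : ℕ, 0 < (P ^ m) i j

/-- Aperiodicity (for a finite chain): every state has eventually positive return
probabilities. -/
def MCAperiodic {n : ℕ} (P : Matrix (Fin n) (Fin n) ℝ) : Prop :=
  ∀ i : Fin n, ∃ N : ℕ, ∀ m : ℕ, N ≤ m → 0 < (P ^ m) i i

/-- A probability (row) vector. -/
def IsProbVec {n : ℕ} (v : Fin n → ℝ) : Prop :=
  (∀ i, 0 ≤ v i) ∧ ∑ i, v i = 1

/-- Total variation distance between two vectors. -/
noncomputable def tvDist {n : ℕ} (μ ν : Fin n → ℝ) : ℝ :=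
  (1 / 2) * ∑ i, |μ i - ν i|

/-- Euclidean norm on ℝⁿ. -/
noncomputable def euclNorm {n : ℕ} (v : Fin n → ℝ) : ℝ :=
  Real.sqrt (∑ i, (v i) ^ 2)

/-- Mixing time of `P` with stationary distribution `π`. -/
noncomputable def mixingTime {n : ℕ} (P : Matrix (Fin n) (Fin n) ℝ)
    (π : Fin n → ℝ) (ε : ℝ) : ℕ :=
  sInf {T : ℕ | ∀ ν : Fin n → ℝ, IsProbVec ν → tvDist (ν ᵥ* (P ^ T)) π ≤ ε}

/-- The interpolation `P_t = (1-t)·P₀ + t·P₁`. -/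
noncomputable def Pt {n : ℕ} (P₀ P₁ : Matrix (Fin n) (Fin n) ℝ) (t : ℝ) :
    Matrix (Fin n) (Fin n) ℝ :=
  (1 - t) • P₀ + t • P₁

/-- The ordered product `P_{(j+1)/T} P_{(j+2)/T} ⋯ P_{k/T}` (identity if `j ≥ k`). -/
noncomputable def prodSeg {n : ℕ} (P₀ P₁ : Matrix (Fin n) (Fin n) ℝ) (T j k : ℕ) :
    Matrix (Fin n) (Fin n) ℝ :=
  ((List.range (k - j)).map (fun i => Pt P₀ P₁ (((j : ℝ) + (i : ℝ) + 1) / (T : ℝ)))).prod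

/-- The ordered product `P_{1/T} P_{2/T} ⋯ P_{k/T}`. -/
noncomputable def adiabProd {n : ℕ} (P₀ P₁ : Matrix (Fin n) (Fin n) ℝ) (T k : ℕ) :
    Matrix (Fin n) (Fin n) ℝ :=
  prodSeg P₀ P₁ T 0 k

/-- Adiabatic time of the adiabatic evolution between `P₀` and `P₁`,
with `π₁` the stationary distribution of `P₁`. -/
noncomputable def adiabaticTime {n : ℕ} (P₀ P₁ : Matrix (Fin n) (Fin n) ℝ)
    (π₁ : Fin n → ℝ) (ε : ℝ) : ℕ :=
  sInf {T' : ℕ | ∀ T : ℕ, T' ≤ T → ∀ ν : Fin n → ℝ, IsProbVec ν →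
    tvDist ((ν ᵥ* P₀) ᵥ* adiabProd P₀ P₁ T T) π₁ ≤ ε}

/-- Stable adiabatic time, where `π s` is the stationary distribution of `P_s`. -/
noncomputable def stableAdiabaticTime {n : ℕ} (P₀ P₁ : Matrix (Fin n) (Fin n) ℝ)
    (π : ℝ → Fin n → ℝ) (ε : ℝ) : ℕ :=
  sInf {T : ℕ | ∀ k : ℕ, 1 ≤ k → k ≤ T →
    tvDist ((π 0) ᵥ* adiabProd P₀ P₁ T k) (π ((k : ℝ) / (T : ℝ))) < ε}

/-- `t_mix(ε) = sup_{s ∈ [0,1]} t_mix(P_s, ε)`, where `π s` is the stationary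
distribution of `P_s`. -/
noncomputable def maxMixingTime {n : ℕ} (P₀ P₁ : Matrix (Fin n) (Fin n) ℝ)
    (π : ℝ → Fin n → ℝ) (ε : ℝ) : ℕ :=
  sSup {m : ℕ | ∃ s ∈ Set.Icc (0 : ℝ) 1, m = mixingTime (Pt P₀ P₁ s) (π s) ε}

/-- `s` is a singular value of `A`: `s ≥ 0` and `s²` is an eigenvalue of `A Aᵀ`
(for a left eigenvector). -/
def IsSingularValue {n : ℕ} (A : Matrix (Fin n) (Fin n) ℝ) (s : ℝ) : Prop :=
  0 ≤ s ∧ ∃ v : Fin n → ℝ, v ≠ 0 ∧ v ᵥ* (A * Aᵀ) = (s ^ 2) • v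

/-- `σ` is the smallest nonzero (positive) singular value of `A`. -/
def IsSmallestPosSingularValue {n : ℕ} (A : Matrix (Fin n) (Fin n) ℝ) (σ : ℝ) : Prop :=
  0 < σ ∧ IsSingularValue A σ ∧ ∀ s : ℝ, 0 < s → IsSingularValue A s → σ ≤ s


namespace Adiab
variable {n : ℕ}

noncomputable def l1 (x : Fin n → ℝ) : ℝ := ∑ i, |x i|

lemma vecMul_apply (x : Fin n → ℝ) (P : Matrix (Fin n) (Fin n) ℝ) (j : Fin n) :
    (x ᵥ* P) j = ∑ i, x i * P i j := rfl

lemma sum_vecMul (x : Fin n → ℝ) {P : Matrix (Fin n) (Fin n) ℝ} (hP : IsStochastic P) :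
    ∑ j, (x ᵥ* P) j = ∑ i, x i := by
  simp only [vecMul_apply]
  rw [Finset.sum_comm]
  simp [← Finset.mul_sum, hP.2]

lemma probVec_vecMul {x : Fin n → ℝ} {P : Matrix (Fin n) (Fin n) ℝ}
    (hx : IsProbVec x) (hP : IsStochastic P) : IsProbVec (x ᵥ* P) := by
  refine ⟨fun j => ?_, by rw [sum_vecMul x hP, hx.2]⟩
  rw [vecMul_apply]
  exact Finset.sum_nonneg fun i _ => mul_nonneg (hx.1 i) (hP.1 i j)

lemma stoch_mul {P Q : Matrix (Fin n) (Fin n) ℝ} (hP : IsStochastic P)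
    (hQ : IsStochastic Q) : IsStochastic (P * Q) := by
  constructor
  · intro i j
    rw [Matrix.mul_apply]
    exact Finset.sum_nonneg fun k _ => mul_nonneg (hP.1 i k) (hQ.1 k j)
  · intro i
    have : (P * Q) i = P i ᵥ* Q := rfl
    rw [this, sum_vecMul _ hQ, hP.2]

lemma stoch_one (hn : 1 ≤ n) : IsStochastic (1 : Matrix (Fin n) (Fin n) ℝ) := by
  constructor
  · intro i j
    by_cases h : i = j <;> simp [Matrix.one_apply, h]
  · intro i
    simp [Matrix.one_apply]

lemma stoch_pow {P : Matrix (Fin n) (Fin n) ℝ} (hn : 1 ≤ n) (hP : IsStochastic P)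
    (k : ℕ) : IsStochastic (P ^ k) := by
  induction k with
  | zero => simpa using stoch_one hn
  | succ k ih => rw [pow_succ]; exact stoch_mul ih hP

lemma stoch_listProd (hn : 1 ≤ n) {L : List (Matrix (Fin n) (Fin n) ℝ)}
    (h : ∀ A ∈ L, IsStochastic A) : IsStochastic L.prod := by
  induction L with
  | nil => simpa using stoch_one hn
  | cons A L ih =>
      rw [List.prod_cons]
      exact stoch_mul (h A (by simp)) (ih fun B hB => h B (by simp [hB]))

lemma l1_vecMul_le (x : Fin n → ℝ) {P : Matrix (Fin n) (Fin n) ℝ}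
    (hP : IsStochastic P) : l1 (x ᵥ* P) ≤ l1 x := by
  unfold l1
  calc ∑ j, |(x ᵥ* P) j| ≤ ∑ j, ∑ i, |x i| * P i j := by
        refine Finset.sum_le_sum fun j _ => ?_
        rw [vecMul_apply]
        refine (Finset.abs_sum_le_sum_abs _ _).trans ?_
        refine Finset.sum_le_sum fun i _ => ?_
        rw [abs_mul, abs_of_nonneg (hP.1 i j)]
    _ = ∑ i, |x i| := by
        rw [Finset.sum_comm]; simp [← Finset.mul_sum, hP.2]

lemma l1_probVec {x : Fin n → ℝ} (hx : IsProbVec x) : l1 x = 1 := by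
  unfold l1
  rw [← hx.2]
  exact Finset.sum_congr rfl fun i _ => abs_of_nonneg (hx.1 i)

end Adiab

namespace Adiab
variable {n : ℕ}

lemma entry_le_pow_add {P : Matrix (Fin n) (Fin n) ℝ} (hn : 1 ≤ n) (hP : IsStochastic P)
    (a b : ℕ) (i k j : Fin n) : (P ^ a) i k * (P ^ b) k j ≤ (P ^ (a + b)) i j := by
  rw [pow_add, Matrix.mul_apply]
  exact Finset.single_le_sum (f := fun k => (P ^ a) i k * (P ^ b) k j)
    (fun k _ => mul_nonneg ((stoch_pow hn hP a).1 i k) ((stoch_pow hn hP b).1 k j))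
    (Finset.mem_univ k)

lemma exists_pos_pow (hn : 1 ≤ n) {P : Matrix (Fin n) (Fin n) ℝ} (hP : IsStochastic P)
    (hi : MCIrreducible P) (ha : MCAperiodic P) :
    ∃ m : ℕ, ∀ i j, 0 < (P ^ m) i j := by
  choose N hN using ha
  choose M hM using hi
  refine ⟨Finset.univ.sup (fun p : Fin n × Fin n => N p.1 + M p.1 p.2), fun i j => ?_⟩
  set K := Finset.univ.sup (fun p : Fin n × Fin n => N p.1 + M p.1 p.2) with hK
  have h1 : N i + M i j ≤ K :=
    Finset.le_sup (f := fun p : Fin n × Fin n => N p.1 + M p.1 p.2) (Finset.mem_univ (i, j))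
  have h2 : K = (K - M i j) + M i j := (Nat.sub_add_cancel (by omega)).symm
  have h3 : N i ≤ K - M i j := by omega
  calc (0:ℝ) < (P ^ (K - M i j)) i i * (P ^ (M i j)) i j :=
        mul_pos (hN i _ h3) (hM i j)
    _ ≤ (P ^ K) i j := by
        conv_rhs => rw [h2]
        exact entry_le_pow_add hn hP _ _ i i j


lemma dobrushin {Q : Matrix (Fin n) (Fin n) ℝ} (hQ : IsStochastic Q) {δ : ℝ}
    (hδ : ∀ i j, δ ≤ Q i j) (x : Fin n → ℝ) (hx : ∑ i, x i = 0) :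
    l1 (x ᵥ* Q) ≤ (1 - n * δ) * l1 x := by
  unfold l1
  have key : ∀ j, |(x ᵥ* Q) j| ≤ ∑ i, |x i| * (Q i j - δ) := by
    intro j
    have h : (x ᵥ* Q) j = ∑ i, x i * (Q i j - δ) := by
      rw [vecMul_apply]
      simp only [mul_sub]
      rw [Finset.sum_sub_distrib, ← Finset.sum_mul, hx, zero_mul, sub_zero]
    rw [h]
    refine (Finset.abs_sum_le_sum_abs _ _).trans (Finset.sum_le_sum fun i _ => ?_)
    rw [abs_mul, abs_of_nonneg (sub_nonneg.2 (hδ i j))]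
  calc ∑ j, |(x ᵥ* Q) j| ≤ ∑ j, ∑ i, |x i| * (Q i j - δ) :=
        Finset.sum_le_sum fun j _ => key j
    _ = ∑ i, |x i| * (1 - n * δ) := by
        rw [Finset.sum_comm]
        refine Finset.sum_congr rfl fun i _ => ?_
        rw [← Finset.mul_sum, Finset.sum_sub_distrib, hQ.2 i]
        simp [Finset.card_univ, mul_comm]
    _ = (1 - n * δ) * ∑ i, |x i| := by rw [← Finset.sum_mul, mul_comm]

lemma one_sub_nδ_nonneg (hn : 1 ≤ n) {Q : Matrix (Fin n) (Fin n) ℝ} (hQ : IsStochastic Q)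
    {δ : ℝ} (hδ : ∀ i j, δ ≤ Q i j) : 0 ≤ 1 - n * δ := by
  have i0 : Fin n := ⟨0, hn⟩
  have : (n : ℝ) * δ ≤ ∑ j, Q i0 j := by
    calc (n : ℝ) * δ = ∑ _j : Fin n, δ := by simp [Finset.card_univ, mul_comm]
      _ ≤ ∑ j, Q i0 j := Finset.sum_le_sum fun j _ => hδ i0 j
  rw [hQ.2 i0] at this
  linarith

lemma dobrushin_pow (hn : 1 ≤ n) {Q : Matrix (Fin n) (Fin n) ℝ} (hQ : IsStochastic Q)
    {δ : ℝ} (hδ : ∀ i j, δ ≤ Q i j) (x : Fin n → ℝ) (hx : ∑ i, x i = 0) (k : ℕ) :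
    l1 (x ᵥ* Q ^ k) ≤ (1 - n * δ) ^ k * l1 x := by
  induction k with
  | zero => simp [Matrix.vecMul_one]
  | succ k ih =>
      have hsum : ∑ i, (x ᵥ* Q ^ k) i = 0 := by
        rw [sum_vecMul x (stoch_pow hn hQ k), hx]
      calc l1 (x ᵥ* Q ^ (k + 1)) = l1 ((x ᵥ* Q ^ k) ᵥ* Q) := by
            rw [pow_succ, ← Matrix.vecMul_vecMul]
        _ ≤ (1 - n * δ) * l1 (x ᵥ* Q ^ k) := dobrushin hQ hδ _ hsum
        _ ≤ (1 - n * δ) * ((1 - n * δ) ^ k * l1 x) := by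
            have := one_sub_nδ_nonneg hn hQ hδ
            exact mul_le_mul_of_nonneg_left ih this
        _ = (1 - n * δ) ^ (k + 1) * l1 x := by ring

end Adiab

namespace Adiab
variable {n : ℕ}

lemma l1_sub_triangle (a b c : Fin n → ℝ) : l1 (a - c) ≤ l1 (a - b) + l1 (b - c) := by
  unfold l1
  rw [← Finset.sum_add_distrib]
  refine Finset.sum_le_sum fun i _ => ?_
  simpa [Pi.sub_apply] using abs_sub_le (a i) (b i) (c i)

lemma l1_sub_prob {a b : Fin n → ℝ} (ha : IsProbVec a) (hb : IsProbVec b) :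
    l1 (a - b) ≤ 2 := by
  have h : l1 (a - b) ≤ l1 a + l1 b := by
    unfold l1
    rw [← Finset.sum_add_distrib]
    refine Finset.sum_le_sum fun i _ => ?_
    simpa [Pi.sub_apply] using abs_sub (a i) (b i)
  rw [l1_probVec ha, l1_probVec hb] at h
  linarith

lemma tvDist_eq (a b : Fin n → ℝ) : tvDist a b = (1 / 2) * l1 (a - b) := rfl

lemma tvDist_triangle (a b c : Fin n → ℝ) :
    tvDist a c ≤ tvDist a b + tvDist b c := by
  rw [tvDist_eq, tvDist_eq, tvDist_eq]
  have := l1_sub_triangle a b c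
  linarith

lemma tvDist_le_one {a b : Fin n → ℝ} (ha : IsProbVec a) (hb : IsProbVec b) :
    tvDist a b ≤ 1 := by
  rw [tvDist_eq]
  have := l1_sub_prob ha hb
  linarith

lemma stat_pow {P : Matrix (Fin n) (Fin n) ℝ} {π : Fin n → ℝ}
    (hstat : π ᵥ* P = π) (k : ℕ) : π ᵥ* P ^ k = π := by
  induction k with
  | zero => simp [Matrix.vecMul_one]
  | succ k ih => rw [pow_succ, ← Matrix.vecMul_vecMul, ih, hstat]

lemma mixing_set_nonempty (hn : 1 ≤ n) {P : Matrix (Fin n) (Fin n) ℝ}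
    (hP : IsStochastic P) (hirr : MCIrreducible P) (hap : MCAperiodic P)
    {π : Fin n → ℝ} (hπ : IsProbVec π) (hstat : π ᵥ* P = π)
    {ε : ℝ} (hε : 0 < ε) :
    ∃ T : ℕ, ∀ ν : Fin n → ℝ, IsProbVec ν → tvDist (ν ᵥ* (P ^ T)) π ≤ ε := by
  obtain ⟨m, hm⟩ := exists_pos_pow hn hP hirr hap
  have hQ : IsStochastic (P ^ m) := stoch_pow hn hP m
  have hne : (Finset.univ : Finset (Fin n × Fin n)).Nonempty := by
    have : Nonempty (Fin n) := ⟨⟨0, hn⟩⟩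
    exact Finset.univ_nonempty
  set δ := Finset.univ.inf' hne (fun p : Fin n × Fin n => (P ^ m) p.1 p.2) with hδdef
  have hδpos : 0 < δ := by
    rw [hδdef, Finset.lt_inf'_iff]
    exact fun p _ => hm p.1 p.2
  have hδle : ∀ i j, δ ≤ (P ^ m) i j := fun i j =>
    Finset.inf'_le _ (Finset.mem_univ (i, j))
  have hc0 : 0 ≤ 1 - (n : ℝ) * δ := one_sub_nδ_nonneg hn hQ hδle
  have hc1 : 1 - (n : ℝ) * δ < 1 := by
    have : (0 : ℝ) < n * δ := by
      have : (1 : ℝ) ≤ n := by exact_mod_cast hn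
      nlinarith
    linarith
  obtain ⟨k, hk⟩ := exists_pow_lt_of_lt_one (by linarith : (0:ℝ) < ε / 2) hc1
  refine ⟨k * m, fun ν hν => ?_⟩
  have hsub : ν ᵥ* P ^ (k * m) - π = (ν - π) ᵥ* (P ^ m) ^ k := by
    rw [Matrix.sub_vecMul, ← pow_mul, mul_comm m k, stat_pow hstat (k * m)]
  rw [tvDist_eq, hsub]
  have hsum0 : ∑ i, (ν - π) i = 0 := by
    simp only [Pi.sub_apply]
    rw [Finset.sum_sub_distrib, hν.2, hπ.2, sub_self]
  have h1 := dobrushin_pow hn hQ hδle (ν - π) hsum0 k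
  have h2 : l1 (ν - π) ≤ 2 := l1_sub_prob hν hπ
  have h3 : (1 - (n:ℝ) * δ) ^ k ≤ ε / 2 := le_of_lt hk
  have h4 : (0:ℝ) ≤ (1 - (n:ℝ) * δ) ^ k := pow_nonneg hc0 k
  have h5 : l1 ((ν - π) ᵥ* (P ^ m) ^ k) ≤ 2 * (ε / 2) := by nlinarith
  linarith

lemma stoch_Pt {P₀ P₁ : Matrix (Fin n) (Fin n) ℝ} (h0 : IsStochastic P₀)
    (h1 : IsStochastic P₁) {t : ℝ} (ht0 : 0 ≤ t) (ht1 : t ≤ 1) :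
    IsStochastic (Pt P₀ P₁ t) := by
  constructor
  · intro i j
    show 0 ≤ (1 - t) * P₀ i j + t * P₁ i j
    have := h0.1 i j; have := h1.1 i j
    nlinarith
  · intro i
    show ∑ j, ((1 - t) * P₀ i j + t * P₁ i j) = 1
    rw [Finset.sum_add_distrib, ← Finset.mul_sum, ← Finset.mul_sum, h0.2, h1.2]
    ring

lemma flatMap_cast (l : List ℕ) :
    (l.flatMap fun a => [((a : ℕ) : ℝ)]) = l.map (Nat.cast : ℕ → ℝ) := by
  induction l with
  | nil => rfl
  | cons a l ih => simp_all

lemma prodSeg_eq {P₀ P₁ : Matrix (Fin n) (Fin n) ℝ} (T j k : ℕ) :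
    prodSeg P₀ P₁ T j k = ((List.range (k - j)).map
      (fun i : ℕ => Pt P₀ P₁ (((j : ℝ) + (i : ℝ) + 1) / (T : ℝ)))).prod := by
  unfold prodSeg
  congr 1
  have h : (do let a ← List.range (k - j); pure ((a : ℕ) : ℝ) : List ℝ)
      = (List.range (k - j)).map (Nat.cast : ℕ → ℝ) := by
    rw [show (do let a ← List.range (k - j); pure ((a : ℕ) : ℝ) : List ℝ)
        = (List.range (k - j)).flatMap (fun a => [((a : ℕ) : ℝ)]) from rfl]
    exact flatMap_cast _
  rw [h, List.map_map]
  rfl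

lemma stoch_prodSeg (hn : 1 ≤ n) {P₀ P₁ : Matrix (Fin n) (Fin n) ℝ}
    (h0 : IsStochastic P₀) (h1 : IsStochastic P₁) {T j k : ℕ} (hk : k ≤ T) :
    IsStochastic (prodSeg P₀ P₁ T j k) := by
  rw [prodSeg_eq]
  apply stoch_listProd hn
  intro A hA
  obtain ⟨i, hi, rfl⟩ := List.mem_map.1 hA
  rw [List.mem_range] at hi
  have hT : 0 < T := by omega
  apply stoch_Pt h0 h1
  · positivity
  · rw [div_le_one (by exact_mod_cast hT)]
    have : j + i + 1 ≤ T := by omega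
    push_cast
    exact_mod_cast this

lemma l1_smul (c : ℝ) (x : Fin n → ℝ) : l1 (c • x) = |c| * l1 x := by
  unfold l1
  rw [Finset.mul_sum]
  exact Finset.sum_congr rfl fun i _ => by simp [abs_mul]

lemma l1_Pt_sub {P₀ P₁ : Matrix (Fin n) (Fin n) ℝ} (h0 : IsStochastic P₀)
    (h1 : IsStochastic P₁) {t : ℝ} (ht0 : 0 ≤ t) (ht1 : t ≤ 1)
    {ρ : Fin n → ℝ} (hρ : IsProbVec ρ) :
    l1 (ρ ᵥ* Pt P₀ P₁ t - ρ ᵥ* P₁) ≤ 2 * (1 - t) := by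
  have h : ρ ᵥ* Pt P₀ P₁ t - ρ ᵥ* P₁ = (1 - t) • (ρ ᵥ* P₀ - ρ ᵥ* P₁) := by
    unfold Pt
    rw [Matrix.vecMul_add]
    ext i
    simp only [Pi.sub_apply, Pi.add_apply, Pi.smul_apply, smul_eq_mul, vecMul_apply,
      Matrix.smul_apply]
    rw [mul_sub, Finset.mul_sum, Finset.mul_sum, ← Finset.sum_sub_distrib,
      ← Finset.sum_add_distrib, ← Finset.sum_sub_distrib]
    exact Finset.sum_congr rfl fun k _ => by ring
  rw [h, l1_smul, abs_of_nonneg (by linarith)]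
  have h2 : l1 (ρ ᵥ* P₀ - ρ ᵥ* P₁) ≤ 2 :=
    l1_sub_prob (probVec_vecMul hρ h0) (probVec_vecMul hρ h1)
  nlinarith

lemma tele (hn : 1 ≤ n) {Q : Matrix (Fin n) (Fin n) ℝ} (hQ : IsStochastic Q)
    (L : List (Matrix (Fin n) (Fin n) ℝ × ℝ))
    (h : ∀ p ∈ L, IsStochastic p.1 ∧ ∀ ρ : Fin n → ℝ, IsProbVec ρ →
        l1 (ρ ᵥ* p.1 - ρ ᵥ* Q) ≤ p.2) :
    ∀ μ : Fin n → ℝ, IsProbVec μ →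
      l1 (μ ᵥ* (L.map Prod.fst).prod - μ ᵥ* Q ^ L.length) ≤ (L.map Prod.snd).sum := by
  induction L with
  | nil => intro μ hμ; simp [Matrix.vecMul_one, l1]
  | cons p L ih =>
      intro μ hμ
      have hp := h p List.mem_cons_self
      have hL : ∀ q ∈ L, IsStochastic q.1 ∧ ∀ ρ : Fin n → ℝ, IsProbVec ρ →
          l1 (ρ ᵥ* q.1 - ρ ᵥ* Q) ≤ q.2 := fun q hq => h q (List.mem_cons_of_mem p hq)
      have hμ1 : IsProbVec (μ ᵥ* p.1) := probVec_vecMul hμ hp.1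
      have e1 : μ ᵥ* ((p :: L).map Prod.fst).prod
          = (μ ᵥ* p.1) ᵥ* (L.map Prod.fst).prod := by
        rw [List.map_cons, List.prod_cons, ← Matrix.vecMul_vecMul]
      have e2 : μ ᵥ* Q ^ (p :: L).length = (μ ᵥ* Q) ᵥ* Q ^ L.length := by
        rw [List.length_cons, pow_succ', ← Matrix.vecMul_vecMul]
      rw [e1, e2, List.map_cons, List.sum_cons]
      have tri := l1_sub_triangle ((μ ᵥ* p.1) ᵥ* (L.map Prod.fst).prod)
        ((μ ᵥ* p.1) ᵥ* Q ^ L.length) ((μ ᵥ* Q) ᵥ* Q ^ L.length)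
      have t1 := ih hL (μ ᵥ* p.1) hμ1
      have t2 : l1 ((μ ᵥ* p.1) ᵥ* Q ^ L.length - (μ ᵥ* Q) ᵥ* Q ^ L.length)
          ≤ p.2 := by
        rw [← Matrix.sub_vecMul]
        exact le_trans (l1_vecMul_le _ (stoch_pow hn hQ _)) (hp.2 μ hμ)
      linarith

end Adiab

namespace Adiab
variable {n : ℕ}

lemma prodSeg_split (P₀ P₁ : Matrix (Fin n) (Fin n) ℝ) (T a b : ℕ) :
    prodSeg P₀ P₁ T 0 (a + b) = prodSeg P₀ P₁ T 0 a * prodSeg P₀ P₁ T a (a + b) := by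
  rw [prodSeg_eq, prodSeg_eq, prodSeg_eq, Nat.sub_zero, Nat.sub_zero,
    Nat.add_sub_cancel_left, List.range_add, List.map_append, List.prod_append,
    List.map_map]
  congr 1
  apply congrArg List.prod
  apply List.map_congr_left
  intro i _
  simp only [Function.comp_apply]
  congr 1
  push_cast
  ring

lemma sum_cast_range (M : ℕ) : ∑ i ∈ Finset.range M, (i : ℝ) = M * (M - 1) / 2 := by
  induction M with
  | zero => simp
  | succ M ih =>
      rw [Finset.sum_range_succ, ih]
      push_cast
      ring

lemma gauss (M : ℕ) : ∑ i ∈ Finset.range M, ((M : ℝ) - 1 - i) = M * (M - 1) / 2 := by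
  rw [Finset.sum_sub_distrib, Finset.sum_const, Finset.card_range, sum_cast_range,
    nsmul_eq_mul]
  ring

lemma list_sum_range (f : ℕ → ℝ) (M : ℕ) :
    ((List.range M).map f).sum = ∑ i ∈ Finset.range M, f i := by
  induction M with
  | zero => simp
  | succ M ih =>
      rw [List.range_succ, List.map_append, List.sum_append, Finset.sum_range_succ, ih]
      simp

end Adiab

open Adiab

/-- For every ε > 0, `t_ad(P₀, P₁, ε) ≤ 2 · t_mix(P₁, ε/2)² / ε`. -/
theorem stmt_0 {n : ℕ} (hn : 1 ≤ n) (P₀ P₁ : Matrix (Fin n) (Fin n) ℝ)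
    (hP₀ : IsStochastic P₀) (hP₀i : MCIrreducible P₀) (hP₀a : MCAperiodic P₀)
    (hP₁ : IsStochastic P₁) (hP₁i : MCIrreducible P₁) (hP₁a : MCAperiodic P₁)
    (π₁ : Fin n → ℝ) (hπ₁ : IsProbVec π₁) (hπ₁stat : π₁ ᵥ* P₁ = π₁)
    (ε : ℝ) (hε : 0 < ε) :
    (adiabaticTime P₀ P₁ π₁ ε : ℝ) ≤ 2 * (mixingTime P₁ π₁ (ε / 2) : ℝ) ^ 2 / ε := by
  classical
  have hSne : {T : ℕ | ∀ ν : Fin n → ℝ, IsProbVec ν →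
      tvDist (ν ᵥ* (P₁ ^ T)) π₁ ≤ ε / 2}.Nonempty :=
    mixing_set_nonempty hn hP₁ hP₁i hP₁a hπ₁ hπ₁stat (half_pos hε)
  set M := mixingTime P₁ π₁ (ε / 2) with hMd
  have hMmem : ∀ ν : Fin n → ℝ, IsProbVec ν → tvDist (ν ᵥ* (P₁ ^ M)) π₁ ≤ ε / 2 :=
    Nat.sInf_mem hSne
  by_cases hM0 : M = 0
  · have h0 : (0 : ℕ) ∈ {T' : ℕ | ∀ T : ℕ, T' ≤ T → ∀ ν : Fin n → ℝ, IsProbVec ν →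
        tvDist ((ν ᵥ* P₀) ᵥ* adiabProd P₀ P₁ T T) π₁ ≤ ε} := by
      intro T _ ν hν
      have hρ : IsProbVec ((ν ᵥ* P₀) ᵥ* adiabProd P₀ P₁ T T) :=
        probVec_vecMul (probVec_vecMul hν hP₀) (stoch_prodSeg hn hP₀ hP₁ le_rfl)
      have h := hMmem _ hρ
      rw [hM0, pow_zero, Matrix.vecMul_one] at h
      linarith
    have hz : adiabaticTime P₀ P₁ π₁ ε = 0 :=
      le_antisymm (Nat.sInf_le h0) (Nat.zero_le _)
    rw [hz, hM0]
    simp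
  · have hM1 : 1 ≤ M := Nat.one_le_iff_ne_zero.2 hM0
    have hM1' : (1 : ℝ) ≤ M := by exact_mod_cast hM1
    have hε2 : ε ≤ 2 := by
      by_contra h
      push_neg at h
      have h0S : (0:ℕ) ∈ {T : ℕ | ∀ ν : Fin n → ℝ, IsProbVec ν →
          tvDist (ν ᵥ* (P₁ ^ T)) π₁ ≤ ε / 2} := by
        intro ν hν
        have : tvDist (ν ᵥ* P₁ ^ 0) π₁ ≤ 1 := by
          rw [pow_zero, Matrix.vecMul_one]; exact tvDist_le_one hν hπ₁
        linarith
      exact hM0 (le_antisymm (Nat.sInf_le h0S) (Nat.zero_le _))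
    set x := 2 * (M : ℝ) ^ 2 / ε with hx
    have hxnn : (0:ℝ) ≤ x := by positivity
    set T₀ := ⌊x⌋₊ with hT₀d
    have hT₀le : (T₀ : ℝ) ≤ x := Nat.floor_le hxnn
    have hMT₀ : M ≤ T₀ := by
      apply Nat.le_floor
      rw [hx, le_div_iff₀ hε]
      nlinarith
    have hkey : (M : ℝ) * ((M : ℝ) - 1) / ε ≤ (T₀ : ℝ) := by
      have h1 : x < (T₀ : ℝ) + 1 := Nat.lt_floor_add_one x
      have h3 : (M:ℝ) * ((M:ℝ) - 1) + ε ≤ 2 * (M:ℝ) ^ 2 := by nlinarith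
      have h2 : (M:ℝ) * ((M:ℝ) - 1) / ε + 1 ≤ x := by
        rw [hx]
        have : (M:ℝ) * ((M:ℝ) - 1) / ε + 1 = ((M:ℝ) * ((M:ℝ) - 1) + ε) / ε := by
          field_simp
        rw [this]
        exact (div_le_div_iff_of_pos_right hε).2 h3
      linarith
    have hT₀A : T₀ ∈ {T' : ℕ | ∀ T : ℕ, T' ≤ T → ∀ ν : Fin n → ℝ, IsProbVec ν →
        tvDist ((ν ᵥ* P₀) ᵥ* adiabProd P₀ P₁ T T) π₁ ≤ ε} := by
      intro T hT ν hν
      have hMT : M ≤ T := le_trans hMT₀ hT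
      have hTpos : 0 < T := lt_of_lt_of_le hM1 hMT
      have hTpos' : (0:ℝ) < (T:ℝ) := by exact_mod_cast hTpos
      have hTr : (M:ℝ) * ((M:ℝ) - 1) / ε ≤ (T:ℝ) :=
        le_trans hkey (by exact_mod_cast hT)
      have hsplit : adiabProd P₀ P₁ T T
          = adiabProd P₀ P₁ T (T - M) * prodSeg P₀ P₁ T (T - M) T := by
        have h := prodSeg_split P₀ P₁ T (T - M) M
        rw [Nat.sub_add_cancel hMT] at h
        exact h
      set μ := (ν ᵥ* P₀) ᵥ* adiabProd P₀ P₁ T (T - M) with hμd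
      have hμprob : IsProbVec μ :=
        probVec_vecMul (probVec_vecMul hν hP₀) (stoch_prodSeg hn hP₀ hP₁ (Nat.sub_le T M))
      have hfin : (ν ᵥ* P₀) ᵥ* adiabProd P₀ P₁ T T = μ ᵥ* prodSeg P₀ P₁ T (T - M) T := by
        rw [hsplit, ← Matrix.vecMul_vecMul]
      rw [hfin]
      set L : List (Matrix (Fin n) (Fin n) ℝ × ℝ) := (List.range M).map
        (fun i : ℕ => (Pt P₀ P₁ ((((T - M : ℕ) : ℝ) + (i : ℝ) + 1) / (T : ℝ)),
          2 * ((M : ℝ) - 1 - (i : ℝ)) / (T : ℝ))) with hLd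
      have htop : ((T - M : ℕ) : ℝ) = (T : ℝ) - (M : ℝ) := by
        rw [Nat.cast_sub hMT]
      have hLfst : (L.map Prod.fst).prod = prodSeg P₀ P₁ T (T - M) T := by
        rw [prodSeg_eq, show T - (T - M) = M by omega, hLd, List.map_map]
        rfl
      have hLlen : L.length = M := by rw [hLd]; simp
      have hLsnd : (L.map Prod.snd).sum = (M : ℝ) * ((M : ℝ) - 1) / (T : ℝ) := by
        rw [hLd, List.map_map]
        rw [show (Prod.snd ∘ fun i : ℕ =>
            (Pt P₀ P₁ ((((T - M : ℕ) : ℝ) + (i : ℝ) + 1) / (T : ℝ)),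
              2 * ((M : ℝ) - 1 - (i : ℝ)) / (T : ℝ)))
            = fun i : ℕ => 2 * ((M : ℝ) - 1 - (i : ℝ)) / (T : ℝ) from rfl]
        rw [list_sum_range]
        have : ∀ i ∈ Finset.range M, 2 * ((M : ℝ) - 1 - (i : ℝ)) / (T : ℝ)
            = (2 / (T:ℝ)) * ((M : ℝ) - 1 - (i : ℝ)) := fun i _ => by ring
        rw [Finset.sum_congr rfl this, ← Finset.mul_sum, gauss]
        field_simp
      have hLhyp : ∀ p ∈ L, IsStochastic p.1 ∧ ∀ ρ : Fin n → ℝ, IsProbVec ρ →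
          l1 (ρ ᵥ* p.1 - ρ ᵥ* P₁) ≤ p.2 := by
        intro p hp
        rw [hLd] at hp
        obtain ⟨i, hi, rfl⟩ := List.mem_map.1 hp
        rw [List.mem_range] at hi
        have hi' : (i : ℝ) ≤ (M : ℝ) - 1 := by
          have : (i : ℝ) + 1 ≤ (M : ℝ) := by exact_mod_cast hi
          linarith
        have ht0 : (0:ℝ) ≤ (((T - M : ℕ) : ℝ) + (i : ℝ) + 1) / (T : ℝ) := by positivity
        have ht1 : (((T - M : ℕ) : ℝ) + (i : ℝ) + 1) / (T : ℝ) ≤ 1 := by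
          rw [div_le_one hTpos', htop]
          linarith
        refine ⟨stoch_Pt hP₀ hP₁ ht0 ht1, fun ρ hρ => ?_⟩
        refine le_trans (l1_Pt_sub hP₀ hP₁ ht0 ht1 hρ) (le_of_eq ?_)
        rw [htop]
        field_simp
        ring
      have htele := tele hn hP₁ L hLhyp μ hμprob
      rw [hLfst, hLlen, hLsnd] at htele
      have hmix := hMmem μ hμprob
      have tri := tvDist_triangle (μ ᵥ* prodSeg P₀ P₁ T (T - M) T) (μ ᵥ* P₁ ^ M) π₁
      have h1 : tvDist (μ ᵥ* prodSeg P₀ P₁ T (T - M) T) (μ ᵥ* P₁ ^ M)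
          ≤ (1/2) * ((M : ℝ) * ((M : ℝ) - 1) / (T : ℝ)) := by
        rw [tvDist_eq]
        linarith
      have h2 : (M : ℝ) * ((M : ℝ) - 1) / (T : ℝ) ≤ ε := by
        rw [div_le_iff₀ hTpos']
        have := (div_le_iff₀ hε).1 hTr
        linarith
      linarith
    have hle : adiabaticTime P₀ P₁ π₁ ε ≤ T₀ := Nat.sInf_le hT₀A
    calc (adiabaticTime P₀ P₁ π₁ ε : ℝ) ≤ (T₀ : ℝ) := by exact_mod_cast hle
      _ ≤ x := hT₀le
end

section
/- There exists a constant C > 0 (depending on P₀ and P₁) such that for every ε ∈ (0,1), the adiabatic time satisfies t_ad(P₀, P₁, ε) ≤ C · t_mix(P₁, ε/2)² / ε. -/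
open Matrix BigOperators

section Aux

variable {n : ℕ}

lemma vecMul_apply' (v : Fin n → ℝ) (A : Matrix (Fin n) (Fin n) ℝ) (j : Fin n) :
    (v ᵥ* A) j = ∑ i, v i * A i j := by
  simp [Matrix.vecMul, dotProduct]

lemma sum_abs_vecMul_le (x : Fin n → ℝ) (A : Matrix (Fin n) (Fin n) ℝ) (c : ℝ)
    (h0 : ∀ i j, 0 ≤ A i j) (hc : ∀ i, ∑ j, A i j = c) :
    ∑ j, |(x ᵥ* A) j| ≤ c * ∑ i, |x i| := by
  calc ∑ j, |(x ᵥ* A) j| ≤ ∑ j, ∑ i, |x i| * A i j := by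
        refine Finset.sum_le_sum fun j _ => ?_
        rw [vecMul_apply']
        refine (Finset.abs_sum_le_sum_abs _ _).trans ?_
        refine Finset.sum_le_sum fun i _ => ?_
        rw [abs_mul, abs_of_nonneg (h0 i j)]
    _ = ∑ i, |x i| * ∑ j, A i j := by
        rw [Finset.sum_comm]; simp [Finset.mul_sum]
    _ = c * ∑ i, |x i| := by
        simp only [hc]; rw [← Finset.sum_mul, mul_comm]

lemma IsStochastic.one : IsStochastic (1 : Matrix (Fin n) (Fin n) ℝ) := by
  constructor
  · intro i j
    by_cases h : i = j <;> simp [Matrix.one_apply, h]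
  · intro i; simp [Matrix.one_apply]

lemma IsStochastic.mul {A B : Matrix (Fin n) (Fin n) ℝ}
    (hA : IsStochastic A) (hB : IsStochastic B) : IsStochastic (A * B) := by
  constructor
  · intro i j
    rw [Matrix.mul_apply]
    exact Finset.sum_nonneg fun k _ => mul_nonneg (hA.1 i k) (hB.1 k j)
  · intro i
    simp only [Matrix.mul_apply]
    rw [Finset.sum_comm]
    calc ∑ k, ∑ j, A i k * B k j = ∑ k, A i k * ∑ j, B k j := by
          simp [Finset.mul_sum]
      _ = 1 := by simp [hB.2, hA.2 i]

lemma IsStochastic.pow {P : Matrix (Fin n) (Fin n) ℝ} (hP : IsStochastic P) (k : ℕ) :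
    IsStochastic (P ^ k) := by
  induction k with
  | zero => simpa using IsStochastic.one
  | succ k ih => rw [pow_succ]; exact ih.mul hP

lemma IsProbVec.vecMul {v : Fin n → ℝ} {A : Matrix (Fin n) (Fin n) ℝ}
    (hv : IsProbVec v) (hA : IsStochastic A) : IsProbVec (v ᵥ* A) := by
  constructor
  · intro j
    rw [vecMul_apply']
    exact Finset.sum_nonneg fun i _ => mul_nonneg (hv.1 i) (hA.1 i j)
  · simp only [vecMul_apply']
    rw [Finset.sum_comm]
    calc ∑ i, ∑ j, v i * A i j = ∑ i, v i * ∑ j, A i j := by simp [Finset.mul_sum]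
      _ = 1 := by simp [hA.2, hv.2]

lemma Pt_stochastic {P₀ P₁ : Matrix (Fin n) (Fin n) ℝ}
    (hP₀ : IsStochastic P₀) (hP₁ : IsStochastic P₁) {s : ℝ} (hs0 : 0 ≤ s) (hs1 : s ≤ 1) :
    IsStochastic (Pt P₀ P₁ s) := by
  constructor
  · intro i j
    simp only [Pt, Matrix.add_apply, Matrix.smul_apply, smul_eq_mul]
    have := hP₀.1 i j; have := hP₁.1 i j
    nlinarith
  · intro i
    simp only [Pt, Matrix.add_apply, Matrix.smul_apply, smul_eq_mul]
    rw [Finset.sum_add_distrib, ← Finset.mul_sum, ← Finset.mul_sum, hP₀.2 i, hP₁.2 i]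
    ring

end Aux

section TV

variable {n : ℕ}

lemma tvDist_nonneg (μ ν : Fin n → ℝ) : 0 ≤ tvDist μ ν := by
  unfold tvDist
  have : (0:ℝ) ≤ ∑ i, |μ i - ν i| := Finset.sum_nonneg fun i _ => abs_nonneg _
  linarith

lemma tvDist_self (μ : Fin n → ℝ) : tvDist μ μ = 0 := by simp [tvDist]

lemma tvDist_triangle (μ ν ρ : Fin n → ℝ) : tvDist μ ρ ≤ tvDist μ ν + tvDist ν ρ := by
  unfold tvDist
  rw [← mul_add, ← Finset.sum_add_distrib]
  have h : ∑ i, |μ i - ρ i| ≤ ∑ i, (|μ i - ν i| + |ν i - ρ i|) := by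
    refine Finset.sum_le_sum fun i _ => ?_
    calc |μ i - ρ i| = |(μ i - ν i) + (ν i - ρ i)| := by ring_nf
      _ ≤ |μ i - ν i| + |ν i - ρ i| := abs_add_le _ _
  linarith

lemma tvDist_le_one {μ ν : Fin n → ℝ} (hμ : IsProbVec μ) (hν : IsProbVec ν) :
    tvDist μ ν ≤ 1 := by
  unfold tvDist
  have h : ∑ i, |μ i - ν i| ≤ ∑ i, (μ i + ν i) := by
    refine Finset.sum_le_sum fun i _ => ?_
    have := hμ.1 i; have := hν.1 i
    rcases abs_cases (μ i - ν i) with ⟨h1, _⟩ | ⟨h1, _⟩ <;> linarith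
  rw [Finset.sum_add_distrib, hμ.2, hν.2] at h
  linarith

lemma tvDist_vecMul_le {μ ν : Fin n → ℝ} {A : Matrix (Fin n) (Fin n) ℝ}
    (hA : IsStochastic A) : tvDist (μ ᵥ* A) (ν ᵥ* A) ≤ tvDist μ ν := by
  unfold tvDist
  have key : ∑ j, |(μ ᵥ* A) j - (ν ᵥ* A) j| ≤ 1 * ∑ i, |μ i - ν i| := by
    have h1 : ∀ j, (μ ᵥ* A) j - (ν ᵥ* A) j = ((μ - ν) ᵥ* A) j := by
      intro j; simp [vecMul_apply', Pi.sub_apply, sub_mul, Finset.sum_sub_distrib]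
    simp only [h1]
    exact sum_abs_vecMul_le (μ - ν) A 1 hA.1 hA.2
  rw [one_mul] at key
  linarith

end TV

section Seg

variable {n : ℕ} {P₀ P₁ : Matrix (Fin n) (Fin n) ℝ}

lemma prodSeg_eq (T j k : ℕ) :
    prodSeg P₀ P₁ T j k =
      ((List.range (k - j)).map
        (fun i : ℕ => Pt P₀ P₁ (((j : ℝ) + (i : ℝ) + 1) / (T : ℝ)))).prod := by
  unfold prodSeg
  have hb : (do let a ← List.range (k - j); pure ((a : ℕ) : ℝ))
      = (List.range (k - j)).map (fun a : ℕ => (a : ℝ)) := by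
    show List.flatMap (fun a : ℕ => [(a : ℝ)]) (List.range (k - j)) = _
    induction (List.range (k - j)) with
    | nil => rfl
    | cons a l ih => simp [List.flatMap_cons, ih]
  rw [hb, List.map_map]
  rfl

lemma prodSeg_eq_one (T : ℕ) {j k : ℕ} (h : k ≤ j) : prodSeg P₀ P₁ T j k = 1 := by
  rw [prodSeg_eq, Nat.sub_eq_zero_of_le h]
  simp

lemma prodSeg_cons (T : ℕ) {j k : ℕ} (h : j < k) :
    prodSeg P₀ P₁ T j k
      = Pt P₀ P₁ (((j : ℝ) + 1) / (T : ℝ)) * prodSeg P₀ P₁ T (j + 1) k := by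
  rw [prodSeg_eq, prodSeg_eq]
  have h1 : k - j = (k - (j + 1)) + 1 := by omega
  rw [h1, List.range_succ_eq_map]
  simp only [List.map_cons, List.prod_cons, List.map_map]
  have e2 : ((fun i : ℕ => Pt P₀ P₁ (((j:ℝ) + (i:ℝ) + 1) / (T:ℝ))) ∘ Nat.succ)
      = (fun i : ℕ => Pt P₀ P₁ ((((j+1:ℕ):ℝ) + (i:ℝ) + 1) / (T:ℝ))) := by
    funext i
    simp only [Function.comp]
    congr 1
    push_cast
    ring
  rw [e2]
  congr 2
  norm_num

lemma prodSeg_stochastic (hP₀ : IsStochastic P₀) (hP₁ : IsStochastic P₁)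
    (T : ℕ) : ∀ d j : ℕ, j + d ≤ T → IsStochastic (prodSeg P₀ P₁ T j (j + d)) := by
  intro d
  induction d with
  | zero =>
    intro j _
    rw [Nat.add_zero, prodSeg_eq_one T le_rfl]
    exact IsStochastic.one
  | succ d ih =>
    intro j hj
    rw [prodSeg_cons T (by omega)]
    have hseg : IsStochastic (prodSeg P₀ P₁ T (j + 1) (j + 1 + d)) := ih (j + 1) (by omega)
    have hTpos : (0:ℝ) < T := by
      have : (1:ℕ) ≤ T := by omega
      exact_mod_cast Nat.lt_of_lt_of_le Nat.zero_lt_one this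
    have hPt : IsStochastic (Pt P₀ P₁ (((j : ℝ) + 1) / (T : ℝ))) := by
      refine Pt_stochastic hP₀ hP₁ (by positivity) ?_
      rw [div_le_one hTpos]
      have : (j:ℝ) + 1 ≤ (T:ℝ) := by exact_mod_cast Nat.le_of_lt_succ (by omega)
      exact this
    have : j + (d + 1) = j + 1 + d := by omega
    rw [this]
    exact hPt.mul hseg

lemma step_close (hP₀ : IsStochastic P₀) (hP₁ : IsStochastic P₁)
    {μ : Fin n → ℝ} (hμ : IsProbVec μ) {s : ℝ} (hs0 : 0 ≤ s) (hs1 : s ≤ 1) :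
    tvDist (μ ᵥ* Pt P₀ P₁ s) (μ ᵥ* P₁) ≤ 1 - s := by
  have hpt : ∀ j, (μ ᵥ* Pt P₀ P₁ s) j - (μ ᵥ* P₁) j
      = (1 - s) * ((μ ᵥ* P₀) j - (μ ᵥ* P₁) j) := by
    intro j
    simp only [vecMul_apply', Pt, Matrix.add_apply, Matrix.smul_apply, smul_eq_mul]
    rw [← Finset.sum_sub_distrib, ← Finset.sum_sub_distrib, Finset.mul_sum]
    exact Finset.sum_congr rfl fun i _ => by ring
  have key : tvDist (μ ᵥ* Pt P₀ P₁ s) (μ ᵥ* P₁) = (1 - s) * tvDist (μ ᵥ* P₀) (μ ᵥ* P₁) := by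
    unfold tvDist
    simp only [hpt, abs_mul, abs_of_nonneg (by linarith : (0:ℝ) ≤ 1 - s)]
    rw [← Finset.mul_sum]
    ring
  rw [key]
  have h1 : tvDist (μ ᵥ* P₀) (μ ᵥ* P₁) ≤ 1 :=
    tvDist_le_one (hμ.vecMul hP₀) (hμ.vecMul hP₁)
  nlinarith [tvDist_nonneg (μ ᵥ* P₀) (μ ᵥ* P₁)]

lemma prodSeg_split (T : ℕ) :
    ∀ d j l : ℕ, j + d ≤ l →
      prodSeg P₀ P₁ T j (j + d) * prodSeg P₀ P₁ T (j + d) l = prodSeg P₀ P₁ T j l := by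
  intro d
  induction d with
  | zero => intro j l _; rw [Nat.add_zero, prodSeg_eq_one T le_rfl, one_mul]
  | succ d ih =>
    intro j l hl
    rw [prodSeg_cons T (show j < j + (d+1) by omega), prodSeg_cons T (show j < l by omega)]
    have h1 : j + (d + 1) = j + 1 + d := by omega
    rw [h1, mul_assoc, ih (j+1) l (by omega)]

end Seg

section Hybrid

variable {n : ℕ} {P₀ P₁ : Matrix (Fin n) (Fin n) ℝ}

lemma hybrid (hP₀ : IsStochastic P₀) (hP₁ : IsStochastic P₁) (T : ℕ) :
    ∀ r j : ℕ, j + r ≤ T → ∀ μ : Fin n → ℝ, IsProbVec μ →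
      tvDist (μ ᵥ* prodSeg P₀ P₁ T j (j + r)) (μ ᵥ* (P₁ ^ r))
        ≤ (r : ℝ) * ((T : ℝ) - (j : ℝ)) / (T : ℝ) := by
  intro r
  induction r with
  | zero =>
    intro j _ μ _
    rw [Nat.add_zero, prodSeg_eq_one T le_rfl, pow_zero]
    simp [tvDist_self]
  | succ r ih =>
    intro j hj μ hμ
    have hTpos : (0:ℝ) < T := by
      have h1 : (1:ℕ) ≤ T := by omega
      exact_mod_cast Nat.lt_of_lt_of_le Nat.zero_lt_one h1
    have hcons : prodSeg P₀ P₁ T j (j + (r + 1))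
        = Pt P₀ P₁ (((j : ℝ) + 1) / (T : ℝ)) * prodSeg P₀ P₁ T (j + 1) (j + 1 + r) := by
      rw [show j + (r + 1) = j + 1 + r from by omega,
        prodSeg_cons T (show j < j + 1 + r by omega)]
    set s : ℝ := ((j : ℝ) + 1) / (T : ℝ) with hs
    have hs0 : 0 ≤ s := by positivity
    have hs1 : s ≤ 1 := by
      rw [hs, div_le_one hTpos]
      exact_mod_cast show j + 1 ≤ T by omega
    have hseg : IsStochastic (prodSeg P₀ P₁ T (j + 1) (j + 1 + r)) :=
      prodSeg_stochastic hP₀ hP₁ T r (j + 1) (by omega)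
    have hstep : tvDist (μ ᵥ* Pt P₀ P₁ s) (μ ᵥ* P₁) ≤ 1 - s :=
      step_close hP₀ hP₁ hμ hs0 hs1
    have h1 : tvDist ((μ ᵥ* Pt P₀ P₁ s) ᵥ* prodSeg P₀ P₁ T (j + 1) (j + 1 + r))
        ((μ ᵥ* P₁) ᵥ* prodSeg P₀ P₁ T (j + 1) (j + 1 + r)) ≤ 1 - s :=
      le_trans (tvDist_vecMul_le hseg) hstep
    have h2 : tvDist ((μ ᵥ* P₁) ᵥ* prodSeg P₀ P₁ T (j + 1) (j + 1 + r))
        ((μ ᵥ* P₁) ᵥ* (P₁ ^ r)) ≤ (r : ℝ) * ((T : ℝ) - ((j : ℝ) + 1)) / (T : ℝ) := by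
      have := ih (j + 1) (by omega) (μ ᵥ* P₁) (hμ.vecMul hP₁)
      simpa using this
    have hrw1 : μ ᵥ* prodSeg P₀ P₁ T j (j + (r + 1))
        = (μ ᵥ* Pt P₀ P₁ s) ᵥ* prodSeg P₀ P₁ T (j + 1) (j + 1 + r) := by
      rw [hcons, ← Matrix.vecMul_vecMul]
    have hrw2 : μ ᵥ* (P₁ ^ (r + 1)) = (μ ᵥ* P₁) ᵥ* (P₁ ^ r) := by
      rw [pow_succ', ← Matrix.vecMul_vecMul]
    rw [hrw1, hrw2]
    have htri := tvDist_triangle ((μ ᵥ* Pt P₀ P₁ s) ᵥ* prodSeg P₀ P₁ T (j + 1) (j + 1 + r))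
      ((μ ᵥ* P₁) ᵥ* prodSeg P₀ P₁ T (j + 1) (j + 1 + r)) ((μ ᵥ* P₁) ᵥ* (P₁ ^ r))
    have hsval : 1 - s = ((T : ℝ) - ((j : ℝ) + 1)) / (T : ℝ) := by
      rw [hs]
      field_simp
    have hfinal : (1 - s) + (r : ℝ) * ((T : ℝ) - ((j : ℝ) + 1)) / (T : ℝ)
        ≤ ((r : ℝ) + 1) * ((T : ℝ) - (j : ℝ)) / (T : ℝ) := by
      rw [hsval, ← add_div, div_le_div_iff₀ hTpos hTpos]
      have hr0 : (0:ℝ) ≤ r := Nat.cast_nonneg r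
      nlinarith
    calc tvDist _ _ ≤ _ := htri
      _ ≤ (1 - s) + (r : ℝ) * ((T : ℝ) - ((j : ℝ) + 1)) / (T : ℝ) := by linarith
      _ ≤ ((r : ℝ) + 1) * ((T : ℝ) - (j : ℝ)) / (T : ℝ) := hfinal
      _ = ((r + 1 : ℕ) : ℝ) * ((T : ℝ) - (j : ℝ)) / (T : ℝ) := by push_cast; ring

end Hybrid

section Converge

variable {n : ℕ} {P : Matrix (Fin n) (Fin n) ℝ}

lemma exists_pos_power (hn : 1 ≤ n) (hP : IsStochastic P)
    (hPi : MCIrreducible P) (hPa : MCAperiodic P) :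
    ∃ M : ℕ, ∀ i j, 0 < (P ^ M) i j := by
  choose m hm using hPi
  choose N hN using hPa
  let f : Fin n × Fin n → ℕ := fun p => N p.1 + m p.1 p.2
  refine ⟨Finset.univ.sup f, fun i j => ?_⟩
  set M := Finset.univ.sup f with hM
  have hle : N i + m i j ≤ M := by
    exact Finset.le_sup (f := f) (Finset.mem_univ (i, j))
  have hsplit : M = (M - m i j) + m i j := by omega
  have hNle : N i ≤ M - m i j := by omega
  have hpow : P ^ M = P ^ (M - m i j) * P ^ (m i j) := by
    rw [← pow_add, ← hsplit]
  rw [hpow, Matrix.mul_apply]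
  have hterm : 0 < (P ^ (M - m i j)) i i * (P ^ (m i j)) i j :=
    mul_pos (hN i _ hNle) (hm i j)
  have hnonneg : ∀ k ∈ Finset.univ, (0:ℝ) ≤ (P ^ (M - m i j)) i k * (P ^ (m i j)) k j :=
    fun k _ => mul_nonneg ((hP.pow _).1 i k) ((hP.pow _).1 k j)
  calc (0:ℝ) < (P ^ (M - m i j)) i i * (P ^ (m i j)) i j := hterm
    _ ≤ ∑ k, (P ^ (M - m i j)) i k * (P ^ (m i j)) k j :=
      Finset.single_le_sum hnonneg (Finset.mem_univ i)

lemma doeblin {Q : Matrix (Fin n) (Fin n) ℝ} (hQ : IsStochastic Q)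
    {δ : ℝ} (hent : ∀ i j, δ ≤ Q i j)
    {μ ν : Fin n → ℝ} (hμ : IsProbVec μ) (hν : IsProbVec ν) :
    tvDist (μ ᵥ* Q) (ν ᵥ* Q) ≤ (1 - n * δ) * tvDist μ ν := by
  set R : Matrix (Fin n) (Fin n) ℝ := Matrix.of fun i j => Q i j - δ with hR
  have hR0 : ∀ i j, 0 ≤ R i j := fun i j => by
    simp only [hR, Matrix.of_apply]
    linarith [hent i j]
  have hRsum : ∀ i, ∑ j, R i j = 1 - n * δ := by
    intro i
    simp only [hR, Matrix.of_apply]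
    rw [Finset.sum_sub_distrib, hQ.2 i]
    simp [mul_comm]
  have hsum0 : ∑ i, (μ i - ν i) = 0 := by
    rw [Finset.sum_sub_distrib, hμ.2, hν.2]; ring
  have hkey : ∀ j, (μ ᵥ* Q) j - (ν ᵥ* Q) j = ((μ - ν) ᵥ* R) j := by
    intro j
    simp only [vecMul_apply', hR, Matrix.of_apply, Pi.sub_apply]
    rw [← Finset.sum_sub_distrib]
    calc ∑ i, (μ i * Q i j - ν i * Q i j)
        = ∑ i, ((μ i - ν i) * (Q i j - δ) + (μ i - ν i) * δ) :=
          Finset.sum_congr rfl fun i _ => by ring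
      _ = ∑ i, (μ i - ν i) * (Q i j - δ) + (∑ i, (μ i - ν i)) * δ := by
          rw [Finset.sum_add_distrib, Finset.sum_mul]
      _ = ∑ i, (μ i - ν i) * (Q i j - δ) := by rw [hsum0]; ring
  unfold tvDist
  simp only [hkey]
  have := sum_abs_vecMul_le (μ - ν) R (1 - n * δ) hR0 hRsum
  have habs : ∀ i, |(μ - ν) i| = |μ i - ν i| := fun i => rfl
  simp only [habs] at this
  linarith

lemma stationary_pow {π : Fin n → ℝ} (hstat : π ᵥ* P = π) (k : ℕ) :
    π ᵥ* (P ^ k) = π := by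
  induction k with
  | zero => simp
  | succ k ih => rw [pow_succ, ← Matrix.vecMul_vecMul, ih, hstat]

lemma exists_mixing (hn : 1 ≤ n) (hP : IsStochastic P)
    (hPi : MCIrreducible P) (hPa : MCAperiodic P)
    {π : Fin n → ℝ} (hπ : IsProbVec π) (hstat : π ᵥ* P = π)
    {ε : ℝ} (hε : 0 < ε) :
    ∃ Tm : ℕ, ∀ ν : Fin n → ℝ, IsProbVec ν → tvDist (ν ᵥ* (P ^ Tm)) π ≤ ε := by
  obtain ⟨M, hM⟩ := exists_pos_power hn hP hPi hPa
  set Q := P ^ M with hQdef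
  have hQ : IsStochastic Q := hP.pow M
  have i0 : Fin n := ⟨0, hn⟩
  have hne : (Finset.univ : Finset (Fin n × Fin n)).Nonempty := ⟨(i0, i0), Finset.mem_univ _⟩
  set δ : ℝ := Finset.univ.inf' hne (fun p => Q p.1 p.2) with hδdef
  have hδpos : 0 < δ := by
    rw [hδdef]
    apply Finset.lt_inf'_iff _ |>.mpr
    intro p _
    exact hM p.1 p.2
  have hent : ∀ i j, δ ≤ Q i j := fun i j =>
    Finset.inf'_le _ (Finset.mem_univ (i, j))
  have hnδ : (n : ℝ) * δ ≤ 1 := by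
    have := hQ.2 i0
    calc (n : ℝ) * δ = ∑ _j : Fin n, δ := by simp [mul_comm]
      _ ≤ ∑ j, Q i0 j := Finset.sum_le_sum fun j _ => hent i0 j
      _ = 1 := hQ.2 i0
  have hr0 : 0 ≤ 1 - (n:ℝ) * δ := by linarith
  have hr1 : 1 - (n:ℝ) * δ < 1 := by
    have hn' : (0:ℝ) < n := by exact_mod_cast hn
    nlinarith
  obtain ⟨k, hk⟩ := exists_pow_lt_of_lt_one hε hr1
  have hiter : ∀ k' : ℕ, ∀ ν : Fin n → ℝ, IsProbVec ν →
      tvDist (ν ᵥ* (Q ^ k')) π ≤ (1 - (n:ℝ) * δ) ^ k' := by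
    intro k'
    induction k' with
    | zero =>
      intro ν hν
      simpa using tvDist_le_one hν hπ
    | succ k' ih =>
      intro ν hν
      have hπQ : π ᵥ* Q = π := stationary_pow hstat M
      have h1 : ν ᵥ* Q ^ (k' + 1) = (ν ᵥ* Q ^ k') ᵥ* Q := by
        rw [pow_succ, ← Matrix.vecMul_vecMul]
      rw [h1, ← hπQ]
      calc tvDist ((ν ᵥ* Q ^ k') ᵥ* Q) (π ᵥ* Q)
          ≤ (1 - n * δ) * tvDist (ν ᵥ* Q ^ k') π :=
            doeblin hQ hent (hν.vecMul (hQ.pow k')) hπ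
        _ ≤ (1 - n * δ) * (1 - (n:ℝ) * δ) ^ k' := by
            have := ih ν hν
            nlinarith [tvDist_nonneg (ν ᵥ* Q ^ k') π]
        _ = (1 - (n:ℝ) * δ) ^ (k' + 1) := by ring
  refine ⟨k * M, fun ν hν => ?_⟩
  have : P ^ (k * M) = Q ^ k := by rw [hQdef, ← pow_mul, Nat.mul_comm]
  rw [this]
  exact le_trans (hiter k ν hν) (le_of_lt hk)

end Converge


/-- There is a constant C > 0 (depending on P₀, P₁) such that for all
ε ∈ (0,1), `t_ad(P₀, P₁, ε) ≤ C · t_mix(P₁, ε/2)² / ε`. -/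
theorem stmt_1 {n : ℕ} (hn : 1 ≤ n) (P₀ P₁ : Matrix (Fin n) (Fin n) ℝ)
    (hP₀ : IsStochastic P₀) (hP₀i : MCIrreducible P₀) (hP₀a : MCAperiodic P₀)
    (hP₁ : IsStochastic P₁) (hP₁i : MCIrreducible P₁) (hP₁a : MCAperiodic P₁)
    (π₁ : Fin n → ℝ) (hπ₁ : IsProbVec π₁) (hπ₁stat : π₁ ᵥ* P₁ = π₁) :
    ∃ C : ℝ, 0 < C ∧ ∀ ε : ℝ, 0 < ε → ε < 1 →
      (adiabaticTime P₀ P₁ π₁ ε : ℝ) ≤ C * (mixingTime P₁ π₁ (ε / 2) : ℝ) ^ 2 / ε := by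
  refine ⟨3, by norm_num, fun ε hε0 hε1 => ?_⟩
  have hS₁ne : {T : ℕ | ∀ ν : Fin n → ℝ, IsProbVec ν →
      tvDist (ν ᵥ* (P₁ ^ T)) π₁ ≤ ε / 2}.Nonempty := by
    obtain ⟨Tm, hTm⟩ := exists_mixing hn hP₁ hP₁i hP₁a hπ₁ hπ₁stat
      (show (0:ℝ) < ε / 2 by linarith)
    exact ⟨Tm, hTm⟩
  have hm : ∀ ν : Fin n → ℝ, IsProbVec ν →
      tvDist (ν ᵥ* (P₁ ^ (mixingTime P₁ π₁ (ε / 2)))) π₁ ≤ ε / 2 :=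
    Nat.sInf_mem hS₁ne
  set m := mixingTime P₁ π₁ (ε / 2) with hmdef
  by_cases hm0 : m = 0
  · -- trivial case: every distribution is already ε/2-close to π₁
    have h0 : ∀ ν : Fin n → ℝ, IsProbVec ν → tvDist ν π₁ ≤ ε / 2 := by
      intro ν hν
      have := hm ν hν
      rwa [hm0, pow_zero, Matrix.vecMul_one] at this
    have h0mem : (0:ℕ) ∈ {T' : ℕ | ∀ T : ℕ, T' ≤ T → ∀ ν : Fin n → ℝ, IsProbVec ν →
        tvDist ((ν ᵥ* P₀) ᵥ* adiabProd P₀ P₁ T T) π₁ ≤ ε} := by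
      intro T _ ν hν
      have hseg : IsStochastic (adiabProd P₀ P₁ T T) := by
        have := prodSeg_stochastic hP₀ hP₁ T T 0 (by omega)
        rwa [Nat.zero_add] at this
      have hout : IsProbVec ((ν ᵥ* P₀) ᵥ* adiabProd P₀ P₁ T T) :=
        (hν.vecMul hP₀).vecMul hseg
      exact le_trans (h0 _ hout) (by linarith)
    have hA0 : adiabaticTime P₀ P₁ π₁ ε = 0 := Nat.le_zero.mp (Nat.sInf_le h0mem)
    rw [hA0, hm0]
    norm_num
  · have hm1 : 1 ≤ m := Nat.one_le_iff_ne_zero.mpr hm0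
    have hmR : (1:ℝ) ≤ (m:ℝ) := by exact_mod_cast hm1
    set T' : ℕ := ⌈2 * (m:ℝ)^2 / ε⌉₊ with hT'def
    have hx0 : (0:ℝ) ≤ 2 * (m:ℝ)^2 / ε := by positivity
    have hmT' : m ≤ T' := by
      have h1 : (m:ℝ) ≤ 2 * (m:ℝ)^2 / ε := by
        rw [le_div_iff₀ hε0]; nlinarith
      calc m = ⌈(m:ℝ)⌉₊ := by simp
        _ ≤ T' := Nat.ceil_le_ceil h1
    have hT'mem : T' ∈ {T'' : ℕ | ∀ T : ℕ, T'' ≤ T → ∀ ν : Fin n → ℝ, IsProbVec ν →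
        tvDist ((ν ᵥ* P₀) ᵥ* adiabProd P₀ P₁ T T) π₁ ≤ ε} := by
      intro T hT ν hν
      have hmT : m ≤ T := le_trans hmT' hT
      have hTpos : 0 < T := lt_of_lt_of_le hm1 hmT
      have hTR : (0:ℝ) < (T:ℝ) := by exact_mod_cast hTpos
      have hsplit : adiabProd P₀ P₁ T T
          = prodSeg P₀ P₁ T 0 (T - m) * prodSeg P₀ P₁ T (T - m) T := by
        show prodSeg P₀ P₁ T 0 T = _
        have := prodSeg_split (P₀ := P₀) (P₁ := P₁) T (T - m) 0 T (by omega)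
        rw [Nat.zero_add] at this
        exact this.symm
      set μ := (ν ᵥ* P₀) ᵥ* prodSeg P₀ P₁ T 0 (T - m) with hμdef
      have hμ : IsProbVec μ := by
        refine IsProbVec.vecMul (hν.vecMul hP₀) ?_
        have := prodSeg_stochastic hP₀ hP₁ T (T - m) 0 (by omega)
        rwa [Nat.zero_add] at this
      have hout : (ν ᵥ* P₀) ᵥ* adiabProd P₀ P₁ T T = μ ᵥ* prodSeg P₀ P₁ T (T - m) T := by
        rw [hsplit, ← Matrix.vecMul_vecMul]
      have hhyb := hybrid hP₀ hP₁ T m (T - m) (by omega) μ hμ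
      rw [show T - m + m = T from by omega] at hhyb
      have hcast : ((T:ℝ) - ((T - m : ℕ):ℝ)) = (m:ℝ) := by
        rw [Nat.cast_sub hmT]; ring
      rw [hcast] at hhyb
      have herr : (m:ℝ) * (m:ℝ) / (T:ℝ) ≤ ε / 2 := by
        rw [div_le_iff₀ hTR]
        have hT2 : 2 * (m:ℝ)^2 / ε ≤ (T:ℝ) :=
          le_trans (Nat.le_ceil _) (Nat.cast_le.mpr hT)
        rw [div_le_iff₀ hε0] at hT2
        nlinarith
      have hmix := hm μ hμ
      rw [hout]
      calc tvDist (μ ᵥ* prodSeg P₀ P₁ T (T - m) T) π₁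
          ≤ tvDist (μ ᵥ* prodSeg P₀ P₁ T (T - m) T) (μ ᵥ* (P₁ ^ m))
            + tvDist (μ ᵥ* (P₁ ^ m)) π₁ := tvDist_triangle _ _ _
        _ ≤ ε / 2 + ε / 2 := add_le_add (le_trans hhyb herr) hmix
        _ = ε := by ring
    have hadle : adiabaticTime P₀ P₁ π₁ ε ≤ T' := Nat.sInf_le hT'mem
    have hcastle : (adiabaticTime P₀ P₁ π₁ ε : ℝ) ≤ (T' : ℝ) := by exact_mod_cast hadle
    have hceil : (T' : ℝ) ≤ 2 * (m:ℝ)^2 / ε + 1 := le_of_lt (Nat.ceil_lt_add_one hx0)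
    have h1le : (1:ℝ) ≤ (m:ℝ)^2 / ε := by
      rw [le_div_iff₀ hε0]; nlinarith
    have hsplit3 : 3 * (m:ℝ)^2 / ε = 2 * (m:ℝ)^2 / ε + (m:ℝ)^2 / ε := by ring
    calc (adiabaticTime P₀ P₁ π₁ ε : ℝ) ≤ (T' : ℝ) := hcastle
      _ ≤ 2 * (m:ℝ)^2 / ε + 1 := hceil
      _ ≤ 3 * (m:ℝ)^2 / ε := by rw [hsplit3]; linarith
end
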